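/- Complete-collapse criterion: let A be the attacked set, with total attacked load T = sum_{i in A} L_i, and let the m = N - |A| non-attacked lines be sorted by increasing free space S_(1) <= S_(2) <= ... <= S_(m), with corresponding loads L_(1), ..., L_(m). The cascade initiated by A destroys the entire system (n_∞(A) = 0) if and only if for every j with 1 <= j <= m: ( T + sum_{r=1}^{j-1} L_(r) ) / (m - j + 1) >= S_(j). -/
import Mathlib

open Finset
open scoped Classical

/-- One step of the equal load redistribution cascade: every alive line whose
free space is at most the total failed load divided by the number of alive lines fails. -/
noncomputable def step {N : ℕ} (L S : Fin N → ℝ) (F : Finset (Fin N)) : Finset (Fin N) :=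
  F ∪ Finset.univ.filter (fun i => S i ≤ (∑ j ∈ F, L j) / ((N : ℝ) - F.card))

/-- The steady state (final failed set) of the cascade initiated by attack set `A`. -/
noncomputable def cascade {N : ℕ} (L S : Fin N → ℝ) (A : Finset (Fin N)) : Finset (Fin N) :=
  (step L S)^[N] A

lemma subset_step {N : ℕ} (L S : Fin N → ℝ) (F : Finset (Fin N)) : F ⊆ step L S F :=
  Finset.subset_union_left

lemma ratio_mono {N : ℕ} (L : Fin N → ℝ) (hL : ∀ i, 0 < L i) {F F' : Finset (Fin N)}
    (h : F ⊆ F') (h' : F'.card < N) :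
    (∑ j ∈ F, L j) / ((N : ℝ) - F.card) ≤ (∑ j ∈ F', L j) / ((N : ℝ) - F'.card) := by
  apply div_le_div₀ (Finset.sum_nonneg fun i _ => (hL i).le)
    (Finset.sum_le_sum_of_subset_of_nonneg h fun i _ _ => (hL i).le)
  · have : (F'.card : ℝ) < N := by exact_mod_cast h'
    linarith
  · have : (F.card : ℝ) ≤ F'.card := by exact_mod_cast Finset.card_le_card h
    linarith

lemma step_mono {N : ℕ} (L S : Fin N → ℝ) (hL : ∀ i, 0 < L i) {F F' : Finset (Fin N)}
    (h : F ⊆ F') : step L S F ⊆ step L S F' := by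
  rcases lt_or_ge F'.card N with h' | h'
  · intro i hi
    rw [step, Finset.mem_union] at hi ⊢
    rcases hi with hi | hi
    · exact Or.inl (h hi)
    · right
      simp only [Finset.mem_filter, Finset.mem_univ, true_and] at hi ⊢
      exact hi.trans (ratio_mono L hL h h')
  · have hu : F' = Finset.univ := by
      apply Finset.eq_univ_of_card
      refine le_antisymm (by simpa using F'.card_le_univ) (by simpa using h')
    intro i _
    exact subset_step L S F' (hu ▸ Finset.mem_univ i)

lemma subset_iterate_step {N : ℕ} (L S : Fin N → ℝ) (F : Finset (Fin N)) (n : ℕ) :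
    F ⊆ (step L S)^[n] F := by
  induction n with
  | zero => simp
  | succ n ih =>
    rw [Function.iterate_succ_apply']
    exact ih.trans (subset_step L S _)

/-- Complete-collapse criterion: sorting the `m = N - |A|` non-attacked lines by
increasing free space via `σ`, the cascade from `A` destroys the whole system iff
for every `j`, the free space of the `j`-th line is at most the total load failed
so far divided by the number of lines not yet failed. -/
theorem complete_collapse_criterion {N : ℕ} (L S : Fin N → ℝ)
    (hL : ∀ i, 0 < L i) (hS : ∀ i, 0 < S i)
    (A : Finset (Fin N)) (m : ℕ) (hm : m = N - A.card)
    (σ : Fin m → Fin N) (hσinj : Function.Injective σ)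
    (hσrange : ∀ i : Fin N, i ∈ Finset.univ \ A ↔ ∃ r, σ r = i)
    (hσmono : Monotone (fun r => S (σ r))) :
    cascade L S A = Finset.univ ↔
      ∀ j : Fin m,
        S (σ j) ≤
          ((∑ i ∈ A, L i) + ∑ r ∈ Finset.univ.filter (fun r => r < j), L (σ r)) /
            ((m : ℝ) - (j : ℕ)) := by
  have hAN : A.card + m = N := by
    have : A.card ≤ N := by simpa using A.card_le_univ
    omega
  have hσnotA : ∀ r : Fin m, σ r ∉ A := by
    intro r hr
    have := (hσrange (σ r)).mpr ⟨r, rfl⟩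
    simp only [Finset.mem_sdiff] at this
    exact this.2 hr
  -- the set of failed lines after the first `j` sorted lines have failed
  set G : Fin m → Finset (Fin N) := fun j => A ∪ (Finset.Iio j).image σ with hG
  have hdisj : ∀ j, Disjoint A ((Finset.Iio j).image σ) := by
    intro j
    rw [Finset.disjoint_right]
    intro i hi hiA
    rcases Finset.mem_image.mp hi with ⟨r, _, rfl⟩
    exact hσnotA r hiA
  have hcardG : ∀ j, (G j).card = A.card + j := by
    intro j
    rw [hG, Finset.card_union_of_disjoint (hdisj j),
      Finset.card_image_of_injective _ hσinj, Fin.card_Iio]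
  have hsumG : ∀ j, (∑ i ∈ G j, L i)
      = (∑ i ∈ A, L i) + ∑ r ∈ Finset.univ.filter (fun r => r < j), L (σ r) := by
    intro j
    have : Finset.univ.filter (fun r => r < j) = Finset.Iio j := by ext r; simp
    rw [this, hG, Finset.sum_union (hdisj j),
      Finset.sum_image (fun x _ y _ h => hσinj h)]
  have hdenG : ∀ j : Fin m, (N : ℝ) - (G j).card = (m : ℝ) - (j : ℕ) := by
    intro j
    rw [hcardG j]
    have : ((A.card : ℝ)) + m = N := by exact_mod_cast hAN
    push_cast
    linarith
  have hcardGlt : ∀ j : Fin m, (G j).card < N := by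
    intro j
    rw [hcardG j]
    have := j.isLt
    omega
  constructor
  · -- collapse implies inequalities
    intro hall j
    by_contra hj
    push_neg at hj
    -- G j is closed under step
    have hclosed : ∀ F, F ⊆ G j → step L S F ⊆ G j := by
      intro F hF i hi
      rw [step, Finset.mem_union] at hi
      rcases hi with hi | hi
      · exact hF hi
      · simp only [Finset.mem_filter, Finset.mem_univ, true_and] at hi
        by_contra hiG
        have hiA : i ∉ A := fun h => hiG (Finset.mem_union_left _ h)
        rcases (hσrange i).mp (by simp [hiA]) with ⟨r, rfl⟩
        have hrj : j ≤ r := by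
          by_contra hrj
          push_neg at hrj
          exact hiG (Finset.mem_union_right _ (Finset.mem_image_of_mem σ (by simpa using hrj)))
        have hmone := hσmono hrj
        have hratio := ratio_mono L hL hF (hcardGlt j)
        rw [hsumG j, hdenG j] at hratio
        have := hi.trans hratio
        simp only at hmone
        linarith
    have hsub : cascade L S A ⊆ G j := by
      rw [cascade]
      have : ∀ n, (step L S)^[n] A ⊆ G j := by
        intro n
        induction n with
        | zero =>
          simp only [Function.iterate_zero_apply, hG]
          exact Finset.subset_union_left
        | succ n ih =>
          rw [Function.iterate_succ_apply']
          exact hclosed _ ih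
      exact this N
    have : σ j ∈ G j := hsub (hall ▸ Finset.mem_univ (σ j))
    rw [hG] at this
    rcases Finset.mem_union.mp this with h | h
    · exact hσnotA j h
    · rcases Finset.mem_image.mp h with ⟨r, hr, hrr⟩
      have := hσinj hrr
      subst this
      simp at hr
  · -- inequalities imply collapse
    intro hcond
    have key : ∀ k, k ≤ m →
        (A ∪ (Finset.univ.filter (fun r : Fin m => (r : ℕ) < k)).image σ) ⊆ (step L S)^[k] A := by
      intro k
      induction k with
      | zero => intro _; simp
      | succ k ih =>
        intro hk1
        have hk : k < m := by omega
        set j : Fin m := ⟨k, hk⟩ with hj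
        have hfilt : Finset.univ.filter (fun r : Fin m => (r : ℕ) < k) = Finset.Iio j := by
          ext r; simp [hj, Fin.lt_def]
        have hfilt1 : Finset.univ.filter (fun r : Fin m => (r : ℕ) < k + 1)
            = insert j (Finset.Iio j) := by
          ext r
          have hval : (⟨k, hk⟩ : Fin m).val = k := rfl
          simp [hj, Fin.lt_def, Fin.ext_iff, hval]
          omega
        have hIH : G j ⊆ (step L S)^[k] A := by
          rw [hG]
          rw [hfilt] at ih
          exact ih hk.le
        rw [Function.iterate_succ_apply', hfilt1]
        have hstep : step L S (G j) ⊆ step L S ((step L S)^[k] A) := step_mono L S hL hIH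
        have hjin : σ j ∈ step L S (G j) := by
          rw [step, Finset.mem_union]
          right
          simp only [Finset.mem_filter, Finset.mem_univ, true_and]
          rw [hsumG j, hdenG j]
          exact hcond j
        intro i hi
        rcases Finset.mem_union.mp hi with hi | hi
        · exact hstep (subset_step L S _ (Finset.mem_union_left _ hi))
        · rcases Finset.mem_image.mp hi with ⟨r, hr, rfl⟩
          rcases Finset.mem_insert.mp hr with rfl | hr
          · exact hstep hjin
          · exact hstep (subset_step L S _
              (Finset.mem_union_right _ (Finset.mem_image_of_mem σ hr)))
    have hGm : (A ∪ (Finset.univ.filter (fun r : Fin m => (r : ℕ) < m)).image σ)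
        = Finset.univ := by
      apply Finset.eq_univ_of_forall
      intro i
      by_cases hiA : i ∈ A
      · exact Finset.mem_union_left _ hiA
      · rcases (hσrange i).mp (by simp [hiA]) with ⟨r, rfl⟩
        exact Finset.mem_union_right _ (Finset.mem_image_of_mem σ (by simp [r.isLt]))
    have h1 : Finset.univ ⊆ (step L S)^[m] A := hGm ▸ key m le_rfl
    have h2 : (step L S)^[m] A ⊆ (step L S)^[N] A := by
      have : (step L S)^[N] A = (step L S)^[N - m] ((step L S)^[m] A) := by
        rw [← Function.iterate_add_apply]
        congr 1
        omega
      rw [this]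
      exact subset_iterate_step L S _ _
    rw [cascade]
    exact Finset.eq_univ_of_forall fun i => h2 (h1 (Finset.mem_univ i))
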